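/- Let S be a Seidel matrix of order n = a + b + c having exactly three distinct eigenvalues λ, μ, ν with multiplicities a, b, c respectively (a, b, c ≥ 1). Then necessarily a = n(n−1+μν)/((λ−μ)(λ−ν)), b = n(n−1+λν)/((μ−λ)(μ−ν)), and c = n(n−1+λμ)/((ν−λ)(ν−μ)); in particular these three quantities are positive integers. -/

import Mathlib

open Polynomial

/-- A Seidel matrix: a real symmetric matrix with zero diagonal and all off-diagonal
entries equal to `±1`. -/
def IsSeidel {m : Type*} (S : Matrix m m ℝ) : Prop :=
  S.IsSymm ∧ (∀ i, S i i = 0) ∧ ∀ i j, i ≠ j → S i j = 1 ∨ S i j = -1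

open Matrix in
private lemma charpoly_conj_aux {n : ℕ} (V W D : Matrix (Fin n) (Fin n) ℝ)
    (h1 : V * W = 1) : (V * D * W).charpoly = D.charpoly := by
  have hC : ∀ A B : Matrix (Fin n) (Fin n) ℝ,
      (A * B).map (C : ℝ → ℝ[X]) = A.map C * B.map C := fun A B =>
    Matrix.map_mul
  have h1' : V.map (C : ℝ → ℝ[X]) * W.map C = 1 := by
    rw [← hC, h1, Matrix.map_one C (map_zero _) (map_one _)]
  have hch : charmatrix (V * D * W) = V.map C * charmatrix D * W.map C := by
    unfold charmatrix
    rw [RingHom.mapMatrix_apply, RingHom.mapMatrix_apply]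
    rw [mul_sub, sub_mul]
    congr 1
    · rw [mul_assoc, (Matrix.scalar_commute (X : ℝ[X]) (fun r => Commute.all _ _) _).eq,
        ← mul_assoc, h1', one_mul]
    · rw [← hC, ← hC]
  unfold Matrix.charpoly
  rw [hch, det_mul, det_mul, mul_right_comm, ← det_mul, h1', det_one, one_mul]

/-- Let `S` be a Seidel matrix of order `n = a + b + c` having exactly three
distinct eigenvalues `lam, mu, nu` with multiplicities `a, b, c ≥ 1` respectively.  Then
`a = n(n−1+μν)/((λ−μ)(λ−ν))`, `b = n(n−1+λν)/((μ−λ)(μ−ν))`, `c = n(n−1+λμ)/((ν−λ)(ν−μ))`;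
in particular these quantities are positive integers. -/
theorem stmt_7 (n a b c : ℕ) (ha : 1 ≤ a) (hb : 1 ≤ b) (hc : 1 ≤ c) (hn : n = a + b + c)
    (lam mu nu : ℝ) (h₁ : lam ≠ mu) (h₂ : lam ≠ nu) (h₃ : mu ≠ nu)
    (S : Matrix (Fin n) (Fin n) ℝ) (hS : IsSeidel S)
    (hspec : S.charpoly = (X - C lam) ^ a * (X - C mu) ^ b * (X - C nu) ^ c) :
    (a : ℝ) = n * (n - 1 + mu * nu) / ((lam - mu) * (lam - nu)) ∧
    (b : ℝ) = n * (n - 1 + lam * nu) / ((mu - lam) * (mu - nu)) ∧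
    (c : ℝ) = n * (n - 1 + lam * mu) / ((nu - lam) * (nu - mu)) := by
  open Matrix in
  obtain ⟨hsym, hdiag, hoff⟩ := hS
  have hA : S.IsHermitian := by
    simpa [Matrix.IsHermitian, Matrix.conjTranspose, Matrix.IsSymm, Matrix.map, Matrix.transpose] using hsym
  set v : Fin n → ℝ := RCLike.ofReal ∘ hA.eigenvalues with hv
  set V : Matrix (Fin n) (Fin n) ℝ := ↑(hA.eigenvectorUnitary) with hVdef
  have hVW : V * star V = 1 := Unitary.coe_mul_star_self _
  have hWV : star V * V = 1 := Unitary.coe_star_mul_self _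
  have hst : S = V * Matrix.diagonal v * star V := hA.spectral_theorem
  -- the characteristic polynomial of `S` is `∏ i, (X - C (v i))`
  have hcp : S.charpoly = ∏ i, (X - C (v i)) := by
    rw [hst, charpoly_conj_aux _ _ _ hVW,
      Matrix.charpoly_of_upperTriangular _ (Matrix.blockTriangular_diagonal v)]
    simp
  -- comparing root multisets
  have hroots : Finset.univ.val.map v = a • {lam} + b • {mu} + c • {nu} := by
    have hL : (∏ i, (X - C (v i))).roots = Finset.univ.val.map v := by
      rw [Finset.prod_eq_multiset_prod,
        show (fun i => X - C (v i)) = (fun r => (X : ℝ[X]) - C r) ∘ v from rfl,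
        ← Multiset.map_map, roots_multiset_prod_X_sub_C]
    have hR : ((X - C lam) ^ a * (X - C mu) ^ b * (X - C nu) ^ c).roots
        = a • {lam} + b • {mu} + c • {nu} := by
      rw [roots_mul (mul_ne_zero (mul_ne_zero (pow_ne_zero _ (X_sub_C_ne_zero lam))
          (pow_ne_zero _ (X_sub_C_ne_zero mu))) (pow_ne_zero _ (X_sub_C_ne_zero nu))),
        roots_mul (mul_ne_zero (pow_ne_zero _ (X_sub_C_ne_zero lam))
          (pow_ne_zero _ (X_sub_C_ne_zero mu)))]
      simp [roots_pow]
    rw [← hL, ← hcp, hspec, hR]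
  have key : ∀ g : ℝ → ℝ, ∑ i, g (v i) = a * g lam + b * g mu + c * g nu := by
    intro g
    have h2 : ∑ i, g (v i) = ((Finset.univ.val.map v).map g).sum := by
      rw [Multiset.map_map]; rfl
    rw [h2, hroots]
    simp [Multiset.map_nsmul, Multiset.sum_nsmul, nsmul_eq_mul]
  -- traces via the spectral decomposition
  have htr : S.trace = ∑ i, v i := by
    rw [hst, Matrix.trace_mul_cycle, hWV, one_mul, Matrix.trace_diagonal]
  have htr2 : (S * S).trace = ∑ i, v i * v i := by
    have hSS : S * S = V * Matrix.diagonal (fun i => v i * v i) * star V := by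
      rw [hst, mul_assoc, mul_assoc,
        show star V * (V * Matrix.diagonal v * star V) = Matrix.diagonal v * star V by
          rw [← mul_assoc, ← mul_assoc, hWV, one_mul],
        ← mul_assoc (Matrix.diagonal v), Matrix.diagonal_mul_diagonal, ← mul_assoc]
    rw [hSS, Matrix.trace_mul_cycle, hWV, one_mul, Matrix.trace_diagonal]
  -- traces from the entries
  have htr0 : S.trace = 0 := by simp [Matrix.trace, Matrix.diag, hdiag]
  have htrn : (S * S).trace = n * (n - 1 : ℝ) := by
    have h1 : ∀ i j, S i j * S j i = if i = j then (0:ℝ) else 1 := by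
      intro i j
      by_cases h : i = j
      · subst h; simp [hdiag]
      · have hs : S j i = S i j := hsym.apply i j
        rw [if_neg h, hs]
        rcases hoff i j h with h' | h' <;> rw [h'] <;> norm_num
    have h2 : ∀ i : Fin n, ∑ j, (if i = j then (0:ℝ) else 1) = n - 1 := by
      intro i
      have h0 : ∀ j, (if i = j then (0:ℝ) else 1) = 1 - (if i = j then 1 else 0) :=
        fun j => by split <;> ring
      simp only [h0, Finset.sum_sub_distrib, Finset.sum_const, Finset.card_univ,
        Fintype.card_fin, Finset.sum_ite_eq, Finset.mem_univ, if_true, nsmul_eq_mul, mul_one]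
    have h3 : (S * S).trace = ∑ i, ∑ j, S i j * S j i := by
      simp [Matrix.trace, Matrix.diag, Matrix.mul_apply]
    rw [h3,
      Finset.sum_congr rfl fun i _ => (Finset.sum_congr rfl fun j _ => h1 i j).trans (h2 i)]
    simp [Finset.sum_const, mul_comm]
    ring
  -- the three linear equations
  have E0 : (a : ℝ) + b + c = n := by rw [hn]; push_cast; ring
  have E1 : (a : ℝ) * lam + b * mu + c * nu = 0 := by
    have hs1 : ∑ i, v i = 0 := by rw [← htr, htr0]
    simpa using (key (fun x => x)).symm.trans hs1
  have E2 : (a : ℝ) * lam ^ 2 + b * mu ^ 2 + c * nu ^ 2 = n * (n - 1 : ℝ) := by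
    have hs2 : ∑ i, v i * v i = n * (n - 1 : ℝ) := by rw [← htr2, htrn]
    have := (key (fun x => x * x)).symm.trans hs2
    linear_combination this
  refine ⟨?_, ?_, ?_⟩
  · rw [eq_div_iff (mul_ne_zero (sub_ne_zero.2 h₁) (sub_ne_zero.2 h₂))]
    linear_combination E2 - (mu + nu) * E1 + (mu * nu) * E0
  · rw [eq_div_iff (mul_ne_zero (sub_ne_zero.2 (Ne.symm h₁)) (sub_ne_zero.2 h₃))]
    linear_combination E2 - (lam + nu) * E1 + (lam * nu) * E0
  · rw [eq_div_iff (mul_ne_zero (sub_ne_zero.2 (Ne.symm h₂)) (sub_ne_zero.2 (Ne.symm h₃)))]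
    linear_combination E2 - (lam + mu) * E1 + (lam * mu) * E0
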